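/- Fix β > 0. The series ∑_{k=1}^∞ k·ξ_β(k) converges and is bounded above by β·(β+2). -/
import Mathlib


/-- The tail sequence of the invariant distribution `π_β^P` of the mean-field limit
of the Power of Choice policy: `ξ_β(0) = 1` and
`ξ_β(x+1) = (−1 + √(1 + 4β²ξ_β(x)²))/(2β)`. -/
noncomputable def xi (β : ℝ) : ℕ → ℝ
  | 0 => 1
  | x + 1 => (-1 + Real.sqrt (1 + 4 * β ^ 2 * (xi β x) ^ 2)) / (2 * β)

lemma xi_nonneg (β : ℝ) (hβ : 0 < β) : ∀ x, 0 ≤ xi β x := by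
  intro x
  cases x with
  | zero => norm_num [xi]
  | succ n =>
    have harg : (0:ℝ) ≤ 1 + 4 * β ^ 2 * (xi β n) ^ 2 := by positivity
    have h1 : (1 : ℝ) ≤ Real.sqrt (1 + 4 * β ^ 2 * (xi β n) ^ 2) := by
      nlinarith [Real.sq_sqrt harg, Real.sqrt_nonneg (1 + 4 * β ^ 2 * (xi β n) ^ 2),
        sq_nonneg (β * xi β n)]
    have : (0:ℝ) ≤ -1 + Real.sqrt (1 + 4 * β ^ 2 * (xi β n) ^ 2) := by linarith
    exact div_nonneg this (by linarith)

lemma xi_rec (β : ℝ) (hβ : 0 < β) (x : ℕ) :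
    xi β (x + 1) = β * ((xi β x) ^ 2 - (xi β (x + 1)) ^ 2) := by
  have harg : (0:ℝ) ≤ 1 + 4 * β ^ 2 * (xi β x) ^ 2 := by
    nlinarith [sq_nonneg (β * xi β x)]
  have hsq : Real.sqrt (1 + 4 * β ^ 2 * (xi β x) ^ 2) ^ 2
      = 1 + 4 * β ^ 2 * (xi β x) ^ 2 := Real.sq_sqrt harg
  have hdef : xi β (x + 1) = (-1 + Real.sqrt (1 + 4 * β ^ 2 * (xi β x) ^ 2)) / (2 * β) := rfl
  have h2 : 2 * β * xi β (x + 1) = -1 + Real.sqrt (1 + 4 * β ^ 2 * (xi β x) ^ 2) := by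
    rw [hdef]; field_simp
  have hs : Real.sqrt (1 + 4 * β ^ 2 * (xi β x) ^ 2) = 2 * β * xi β (x + 1) + 1 := by
    linarith
  rw [hs] at hsq
  have key : 4 * β * (xi β (x + 1) - β * ((xi β x) ^ 2 - (xi β (x + 1)) ^ 2)) = 0 := by
    linear_combination hsq
  have hβ' : (4 : ℝ) * β ≠ 0 := by positivity
  have := (mul_eq_zero.mp key).resolve_left hβ'
  linarith

lemma xi_le_prev (β : ℝ) (hβ : 0 < β) (x : ℕ) : xi β (x + 1) ≤ xi β x := by
  have h := xi_rec β hβ x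
  have h0 := xi_nonneg β hβ x
  have h1 := xi_nonneg β hβ (x + 1)
  by_contra hc
  push_neg at hc
  have hy : 0 < xi β (x + 1) := lt_of_le_of_lt h0 hc
  have h2 : (xi β x) ^ 2 < (xi β (x + 1)) ^ 2 := by nlinarith
  nlinarith

lemma xi_le_one (β : ℝ) (hβ : 0 < β) : ∀ x, xi β x ≤ 1 := by
  intro x
  induction x with
  | zero => norm_num [xi]
  | succ n ih => exact le_trans (xi_le_prev β hβ n) ih

/-- Telescoping identity: `∑_{k<N+1} ξ(k) + β ξ(N)² = 1 + β`. -/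
lemma xi_sum_eq (β : ℝ) (hβ : 0 < β) : ∀ N : ℕ,
    ∑ k ∈ Finset.range (N + 1), xi β k + β * (xi β N) ^ 2 = 1 + β := by
  intro N
  induction N with
  | zero => norm_num [xi]
  | succ n ih =>
    rw [Finset.sum_range_succ]
    have h := xi_rec β hβ n
    linarith [ih, h]

/-- Abel-summation identity:
`∑_{k<N+1} k ξ(k) = β (∑_{j<N} ξ(j)² − N ξ(N)²)`. -/
lemma xi_weighted_sum_eq (β : ℝ) (hβ : 0 < β) : ∀ N : ℕ,
    ∑ k ∈ Finset.range (N + 1), (k : ℝ) * xi β k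
      = β * (∑ j ∈ Finset.range N, (xi β j) ^ 2 - (N : ℝ) * (xi β N) ^ 2) := by
  intro N
  induction N with
  | zero => simp
  | succ n ih =>
    rw [Finset.sum_range_succ, ih, Finset.sum_range_succ (fun j => (xi β j) ^ 2)]
    have h := xi_rec β hβ n
    push_cast
    nlinarith [h]

lemma xi_partial_bound (β : ℝ) (hβ : 0 < β) (N : ℕ) :
    ∑ k ∈ Finset.range N, (k : ℝ) * xi β k ≤ β * (β + 2) := by
  cases N with
  | zero => simp; positivity
  | succ n =>
    rw [xi_weighted_sum_eq β hβ n]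
    have h1 : ∑ j ∈ Finset.range n, (xi β j) ^ 2 ≤ ∑ j ∈ Finset.range n, xi β j := by
      apply Finset.sum_le_sum
      intro i _
      nlinarith [xi_nonneg β hβ i, xi_le_one β hβ i]
    have h2 : ∑ j ∈ Finset.range n, xi β j ≤ 1 + β := by
      rcases Nat.eq_zero_or_pos n with h | h
      · subst h; simp; linarith
      · obtain ⟨m, rfl⟩ := Nat.exists_eq_succ_of_ne_zero (Nat.pos_iff_ne_zero.mp h)
        have := xi_sum_eq β hβ m
        nlinarith [sq_nonneg (xi β m)]
    have h3 : (0:ℝ) ≤ (n : ℝ) * (xi β n) ^ 2 := by positivity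
    nlinarith

/-- The series `∑_{k=1}^∞ k·ξ_β(k)` converges and is bounded above by `β(β+2)`. -/
theorem xi_weighted_sum_bound (β : ℝ) (hβ : 0 < β) :
    Summable (fun k : ℕ => (k : ℝ) * xi β k) ∧
      ∑' k : ℕ, (k : ℝ) * xi β k ≤ β * (β + 2) := by
  have hnn : ∀ k : ℕ, 0 ≤ (k : ℝ) * xi β k := fun k =>
    mul_nonneg (Nat.cast_nonneg k) (xi_nonneg β hβ k)
  have hs : Summable (fun k : ℕ => (k : ℝ) * xi β k) :=
    summable_of_sum_range_le hnn (xi_partial_bound β hβ)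
  exact ⟨hs, Summable.tsum_le_of_sum_range_le hs (xi_partial_bound β hβ)⟩
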